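/- Let T* be the star tree on X, where |X| = n ≥ 3. A subset L of binom(X,2) with X = ∪_{c∈L} c is an edge-weight lasso for T* if and only if L is strongly non-bipartite (i.e. no connected component of the graph Γ(L) = (X, L) is bipartite). -/

import Mathlib

/- Common definitions for formalizing results of Dress, Huber & Steel,
   "Lassoing a phylogenetic tree I: Basic properties, shellings, and covers".

   Trees are modelled as simple graphs on an ambient vertex type `U`;
   the vertex set of the tree is the support of the graph (every vertex of a
   tree with at least two vertices has degree >= 1). -/

noncomputable section
open scoped Classical

namespace Lasso

variable {U : Type}

/-- The degree of a vertex. -/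
def deg (G : SimpleGraph U) (v : U) : ℕ := (G.neighborSet v).ncard

/-- A leaf is a vertex of degree `1`. -/
def IsLeaf (G : SimpleGraph U) (v : U) : Prop := deg G v = 1

/-- An interior vertex: a non-leaf vertex of the tree. -/
def Interior (G : SimpleGraph U) (v : U) : Prop := v ∈ G.support ∧ ¬ IsLeaf G v

/-- `G` is an `X`-tree: a finite tree without vertices of degree two whose
    leaf set is exactly `X`. -/
structure IsXTree (X : Set U) (G : SimpleGraph U) : Prop where
  support_finite : G.support.Finite
  support_nonempty : G.support.Nonempty
  connected : ∀ a ∈ G.support, ∀ b ∈ G.support, G.Reachable a b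
  acyclic : G.IsAcyclic
  no_deg_two : ∀ v : U, deg G v ≠ 2
  leaves_eq : X = {v : U | IsLeaf G v}

/-- An edge weighting of `G`: nonnegative, and zero away from the edges of `G`
    (so that it represents an element of `ℝ_{≥0}^E`). -/
structure IsWeighting (G : SimpleGraph U) (ω : Sym2 U → ℝ) : Prop where
  nonneg : ∀ e, 0 ≤ ω e
  zero_off : ∀ e, e ∉ G.edgeSet → ω e = 0

/-- A proper edge weighting: in addition strictly positive on interior edges
    (edges both of whose endpoints are non-leaves). -/
structure IsProperWeighting (G : SimpleGraph U) (ω : Sym2 U → ℝ)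
    extends IsWeighting G ω : Prop where
  interior_pos : ∀ e ∈ G.edgeSet, (∀ u ∈ e, ¬ IsLeaf G u) → 0 < ω e

/-- The set `E_T(x|y)` of edges separating `x` from `y`, i.e. the edges lying
    on every walk from `x` to `y` (in a tree: the edges of the path). -/
def pathEdges (G : SimpleGraph U) (x y : U) : Set (Sym2 U) :=
  {e | e ∈ G.edgeSet ∧ ∀ p : G.Walk x y, e ∈ p.edges}

/-- The induced distance `D_ω(x,y)`. -/
def tdist (G : SimpleGraph U) (ω : Sym2 U → ℝ) (x y : U) : ℝ :=
  ∑ᶠ e ∈ pathEdges G x y, ω e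

/-- Path edge set of an unordered pair. -/
def pairPathEdges (G : SimpleGraph U) (c : Sym2 U) : Set (Sym2 U) :=
  {e | e ∈ G.edgeSet ∧ ∀ x y : U, c = s(x, y) → ∀ p : G.Walk x y, e ∈ p.edges}

/-- `D_ω` on an unordered pair (a cord); `λ^T_c(ω)`. -/
def pdist (G : SimpleGraph U) (ω : Sym2 U → ℝ) (c : Sym2 U) : ℝ :=
  ∑ᶠ e ∈ pairPathEdges G c, ω e

/-- `(G,ω)` and `(G',ω')` are `L`-isometric. -/
def LIso (L : Set (Sym2 U)) (G : SimpleGraph U) (ω : Sym2 U → ℝ)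
    (G' : SimpleGraph U) (ω' : Sym2 U → ℝ) : Prop :=
  ∀ x y : U, s(x, y) ∈ L → tdist G ω x y = tdist G' ω' x y

/-- `L` is a set of cords of `X`: 2-element subsets of `X`. -/
def IsCordSet (X : Set U) (L : Set (Sym2 U)) : Prop :=
  ∀ c ∈ L, ¬ c.IsDiag ∧ ∀ u ∈ c, u ∈ X

/-- The union of all cords in `L`. -/
def cup (L : Set (Sym2 U)) : Set U := {v | ∃ c ∈ L, v ∈ c}

/-- `L` is an edge-weight lasso for `G`. -/
def EdgeWeightLasso (G : SimpleGraph U) (L : Set (Sym2 U)) : Prop :=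
  ∀ ω ω' : Sym2 U → ℝ, IsProperWeighting G ω → IsProperWeighting G ω' →
    LIso L G ω G ω' → ω = ω'

/-- `G ≃ G'` via a graph isomorphism fixing `X` pointwise. -/
def FixingIso (X : Set U) (G G' : SimpleGraph U) : Prop :=
  ∃ φ : G ≃g G', ∀ x ∈ X, φ x = x

/-- `(G,ω)` and `(G',ω')` are isometric: a graph isomorphism fixing `X`
    pointwise and preserving edge weights. -/
def FixingIsometry (X : Set U) (G G' : SimpleGraph U) (ω ω' : Sym2 U → ℝ) : Prop :=
  ∃ φ : G ≃g G', (∀ x ∈ X, φ x = x) ∧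
    ∀ e ∈ G.edgeSet, ω' (Sym2.map (fun u => φ u) e) = ω e

/-- `L` is a topological lasso for the `X`-tree `G`. -/
def TopologicalLasso (X : Set U) (G : SimpleGraph U) (L : Set (Sym2 U)) : Prop :=
  ∀ G' : SimpleGraph U, IsXTree X G' →
    ∀ ω ω' : Sym2 U → ℝ, IsProperWeighting G ω → IsProperWeighting G' ω' →
      LIso L G ω G' ω' → FixingIso X G G'

/-- `L` is a strong lasso for the `X`-tree `G`. -/
def StrongLasso (X : Set U) (G : SimpleGraph U) (L : Set (Sym2 U)) : Prop :=
  ∀ G' : SimpleGraph U, IsXTree X G' →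
    ∀ ω ω' : Sym2 U → ℝ, IsProperWeighting G ω → IsProperWeighting G' ω' →
      LIso L G ω G' ω' → FixingIsometry X G G' ω ω'

/-- `G` displays the quartet `a a' ‖ b b'`: some edge lies on all four paths
    joining `a` or `a'` to `b` or `b'`. -/
def DisplaysQ (G : SimpleGraph U) (a a' b b' : U) : Prop :=
  ∃ e : Sym2 U, e ∈ pathEdges G a b ∧ e ∈ pathEdges G a b' ∧
    e ∈ pathEdges G a' b ∧ e ∈ pathEdges G a' b'

def Distinct4 (a b c d : U) : Prop :=
  a ≠ b ∧ a ≠ c ∧ a ≠ d ∧ b ≠ c ∧ b ≠ d ∧ c ≠ d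

/-- `a a' ‖ b b' ∈ Q(G)`: a quartet on four distinct elements of `X`
    displayed by `G`. -/
def QuartetOf (X : Set U) (G : SimpleGraph U) (a a' b b' : U) : Prop :=
  a ∈ X ∧ a' ∈ X ∧ b ∈ X ∧ b' ∈ X ∧ Distinct4 a a' b b' ∧ DisplaysQ G a a' b b'

/-- `G` displays `a a' | b b'`: it displays neither `a b ‖ a' b'` nor
    `a b' ‖ a' b`. -/
def DisplaysBar (G : SimpleGraph U) (a a' b b' : U) : Prop :=
  ¬ DisplaysQ G a b a' b' ∧ ¬ DisplaysQ G a b' a' b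

/-- `A, B` is a virtual `T`-split of `X`. -/
def VirtualSplit (X : Set U) (G : SimpleGraph U) (A B : Set U) : Prop :=
  A.Nonempty ∧ B.Nonempty ∧ Disjoint A B ∧ A ∪ B = X ∧
    ∀ a ∈ A, ∀ a' ∈ A, ∀ b ∈ B, ∀ b' ∈ B, a ≠ a' → b ≠ b' → DisplaysBar G a a' b b'

/-- `G ≤ G'` (`G'` refines `G`), via the standard characterization
    `Q(T) ⊆ Q(T')` of refinement of `X`-trees. -/
def Refines (X : Set U) (G G' : SimpleGraph U) : Prop :=
  ∀ a a' b b' : U, QuartetOf X G a a' b b' → QuartetOf X G' a a' b b'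

/-- `L` is a weak lasso for (coralls) the `X`-tree `G`. -/
def WeakLasso (X : Set U) (G : SimpleGraph U) (L : Set (Sym2 U)) : Prop :=
  ∀ G' : SimpleGraph U, IsXTree X G' →
    ∀ ω ω' : Sym2 U → ℝ, IsProperWeighting G ω → IsProperWeighting G' ω' →
      LIso L G ω G' ω' → Refines X G G'

/-- The subgraph induced on a vertex set `A`. -/
def restrict {α : Type*} (Γ : SimpleGraph α) (A : Set α) : SimpleGraph α where
  Adj u v := Γ.Adj u v ∧ u ∈ A ∧ v ∈ A
  symm := by constructor; rintro u v ⟨h, hu, hv⟩; exact ⟨h.symm, hv, hu⟩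
  loopless := by constructor; rintro v ⟨h, _, _⟩; exact Γ.loopless.irrefl v h

/-- The restriction of `Γ` to `A` is a connected graph. -/
def ConnectedOn {α : Type*} (Γ : SimpleGraph α) (A : Set α) : Prop :=
  ∀ x ∈ A, ∀ y ∈ A, (restrict Γ A).Reachable x y

/-- The connected component of `x` in `Γ` is bipartite. -/
def ComponentBipartite {α : Type*} (Γ : SimpleGraph α) (x : α) : Prop :=
  ∃ f : α → Bool, ∀ u v : α, Γ.Reachable x u → Γ.Adj u v → f u ≠ f v

/-- No connected component (of the graph with vertex set `S`) is bipartite. -/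
def StronglyNonBipartite {α : Type*} (Γ : SimpleGraph α) (S : Set α) : Prop :=
  ∀ x ∈ S, ¬ ComponentBipartite Γ x

/-- The graph `Γ` is bipartite. -/
def Bipartite {α : Type*} (Γ : SimpleGraph α) : Prop :=
  ∃ f : α → Bool, ∀ u v : α, Γ.Adj u v → f u ≠ f v

/-- `E_v`: the set of edges of `G` containing `v`. -/
def Ev (G : SimpleGraph U) (v : U) : Set (Sym2 U) := {e | e ∈ G.edgeSet ∧ v ∈ e}

/-- The graph `G(L,v)` on the edge set `E_v`: two distinct edges at `v` are
    adjacent if some cord of `L` has both on its path. -/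
def covGraph (G : SimpleGraph U) (L : Set (Sym2 U)) (v : U) : SimpleGraph (Sym2 U) where
  Adj e e' := e ≠ e' ∧ e ∈ Ev G v ∧ e' ∈ Ev G v ∧
    ∃ x y : U, s(x, y) ∈ L ∧ e ∈ pathEdges G x y ∧ e' ∈ pathEdges G x y
  symm := by
    constructor; rintro e e' ⟨hne, he, he', x, y, hc, hp, hp'⟩
    exact ⟨hne.symm, he', he, x, y, hc, hp', hp⟩
  loopless := by constructor; rintro e ⟨hne, _⟩; exact hne rfl

/-- `G(L,v)` is the complete graph on `E_v`. -/
def CompleteAt (G : SimpleGraph U) (L : Set (Sym2 U)) (v : U) : Prop :=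
  ∀ e ∈ Ev G v, ∀ e' ∈ Ev G v, e ≠ e' → (covGraph G L v).Adj e e'

/-- `L` is a `t`-cover of `G`. -/
def TCover (X : Set U) (G : SimpleGraph U) (L : Set (Sym2 U)) : Prop :=
  cup L = X ∧ ∀ v : U, Interior G v → CompleteAt G L v

/-- The graph `Γ(L, c)` for the cord `c = x x'`, with vertex set `X − {x,x'}`
    and edge set `L^(c)`. -/
def cordGraphC (X : Set U) (G : SimpleGraph U) (L : Set (Sym2 U)) (x x' : U) :
    SimpleGraph U where
  Adj y y' := y ≠ y' ∧ y ≠ x ∧ y ≠ x' ∧ y' ≠ x ∧ y' ≠ x' ∧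
    s(y, y') ∈ L ∧ QuartetOf X G x x' y y' ∧
    ((s(x, y) ∈ L ∧ s(x', y') ∈ L) ∨ (s(x, y') ∈ L ∧ s(x', y) ∈ L))
  symm := by
    constructor; rintro y y' ⟨hne, h1, h2, h3, h4, hL,
      ⟨hx1, hx2, hy1, hy2, ⟨d1, d2, d3, d4, d5, d6⟩, e, p1, p2, p3, p4⟩, hor⟩
    exact ⟨hne.symm, h3, h4, h1, h2, by rwa [Sym2.eq_swap],
      ⟨hx1, hx2, hy2, hy1, ⟨d1, d3, d2, d5, d4, d6.symm⟩, e, p2, p1, p4, p3⟩, hor.symm⟩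
  loopless := by constructor; rintro y ⟨hne, _⟩; exact hne rfl

/-- `v` lies on the path of `G` from `x` to `y`. -/
def OnPath (G : SimpleGraph U) (x y v : U) : Prop :=
  v = x ∨ v = y ∨ ∃ e ∈ pathEdges G x y, v ∈ e

/-- `v = med_G(a,b,c)`: `v` lies on all three pairwise paths. -/
def IsMedian (G : SimpleGraph U) (a b c v : U) : Prop :=
  OnPath G a b v ∧ OnPath G a c v ∧ OnPath G b c v

/-- `L` is a triplet cover of `G`. -/
def TripletCover (X : Set U) (G : SimpleGraph U) (L : Set (Sym2 U)) : Prop :=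
  ∀ v : U, Interior G v → ∃ a b c : U, a ∈ X ∧ b ∈ X ∧ c ∈ X ∧
    a ≠ b ∧ a ≠ c ∧ b ≠ c ∧
    s(a, b) ∈ L ∧ s(a, c) ∈ L ∧ s(b, c) ∈ L ∧ IsMedian G a b c v

/-- `L` is a pointed `x`-cover of `G`. -/
def PointedCover (X : Set U) (G : SimpleGraph U) (L : Set (Sym2 U)) (x : U) : Prop :=
  cup L = X ∧ (∀ v : U, Interior G v → CompleteAt G L v) ∧
    ∀ v : U, Interior G v → ∃ a b : U, a ≠ b ∧
      s(a, x) ∈ L ∧ s(b, x) ∈ L ∧ IsMedian G a b x v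

/-- Every interior vertex has degree `3`. -/
def IsBinary (G : SimpleGraph U) : Prop := ∀ v : U, Interior G v → deg G v = 3

/-- `a, b` form a `T`-cherry with common neighbour `v`. -/
def IsCherry (G : SimpleGraph U) (a b v : U) : Prop :=
  a ≠ b ∧ IsLeaf G a ∧ IsLeaf G b ∧ G.Adj a v ∧ G.Adj b v

/-- `a, b` form a proper `T`-cherry with common neighbour `v` of degree `3`. -/
def IsProperCherry (G : SimpleGraph U) (a b v : U) : Prop :=
  IsCherry G a b v ∧ deg G v = 3

/-- `W` is a `T`-core of `G`. -/
def IsCore (G : SimpleGraph U) (W : Set U) : Prop :=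
  W.Nonempty ∧ W ⊆ G.support ∧
    (∀ a ∈ W, ∀ b ∈ W, (restrict G W).Reachable a b) ∧
    ∀ v ∈ W, deg (restrict G W) v = 1 ∨ deg (restrict G W) v = deg G v

/-- `X_W`: the leaf set of the induced tree `T_W`. -/
def coreLeaves (G : SimpleGraph U) (W : Set U) : Set U :=
  {v | v ∈ W ∧ deg (restrict G W) v = 1}

/-- `g` is the gate of `x` in `W`: the vertex of `W` closest to `x`. -/
def IsGate (G : SimpleGraph U) (W : Set U) (x g : U) : Prop :=
  g ∈ W ∧ ∀ w ∈ W, OnPath G x w g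

/-- `L_W`: the cords induced on the gates. -/
def gateCords (G : SimpleGraph U) (W : Set U) (L : Set (Sym2 U)) : Set (Sym2 U) :=
  {c | ∃ p q y y' : U, s(p, q) ∈ L ∧ IsGate G W p y ∧ IsGate G W q y' ∧
       y ≠ y' ∧ c = s(y, y')}

/-- The gate map of the cherry reduction: `a, b ↦ v`, all else fixed. -/
def cherryMap (a b v : U) : U → U := fun p => if p = a ∨ p = b then v else p

/-- `L_U` for the cherry reduction at the proper cherry `a,b` with neighbour `v`. -/
def cherryLU (L : Set (Sym2 U)) (a b v : U) : Set (Sym2 U) :=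
  {c | ∃ p q : U, s(p, q) ∈ L ∧ cherryMap a b v p ≠ cherryMap a b v q ∧
       c = s(cherryMap a b v p, cherryMap a b v q)}

/-- `X(a, L^{ab}) = {y : ay ∈ L − {ab}}`. -/
def sideSet (L : Set (Sym2 U)) (a b : U) : Set U :=
  {y | s(a, y) ∈ L ∧ s(a, y) ≠ s(a, b)}

/-- `Σ_{c ∈ LU} ρ(c)·λ^{TU}_c = 0` as a linear form on `ℝ^{E_U}`. -/
def RhoAnnihilates (TU : SimpleGraph U) (LU : Set (Sym2 U)) (ρ : Sym2 U → ℝ) : Prop :=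
  ∀ η : Sym2 U → ℝ, (∀ e, e ∉ TU.edgeSet → η e = 0) →
    ∑ᶠ c ∈ LU, ρ c * pdist TU η c = 0

/-- `D_ω(ab|cd)`. -/
def Dq (G : SimpleGraph U) (ω : Sym2 U → ℝ) (a b c d : U) : ℝ :=
  max (tdist G ω a c + tdist G ω b d) (tdist G ω a d + tdist G ω b c)
    - tdist G ω a b - tdist G ω c d

/-- The star tree on `X` with central vertex `z`. -/
def starGraph (X : Set U) (z : U) : SimpleGraph U :=
  SimpleGraph.fromEdgeSet {c | ∃ x ∈ X, c = s(x, z)}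

/-- `A ∨ B`: all cords with one end in `A` and the other in `B`. -/
def vee (A B : Set U) : Set (Sym2 U) := {c | ∃ a ∈ A, ∃ b ∈ B, c = s(a, b)}

/-- A `T`-shelling of `binom(X,2) − L` with cords `aᵢbᵢ` and pivots `pᵢ, qᵢ`. -/
def IsShelling (X : Set U) (G : SimpleGraph U) (L : Set (Sym2 U)) (m : ℕ)
    (a b p q : Fin m → U) : Prop :=
  (∀ i, a i ∈ X ∧ b i ∈ X ∧ a i ≠ b i ∧ s(a i, b i) ∉ L) ∧
  Function.Injective (fun i => s(a i, b i)) ∧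
  (∀ x y : U, x ∈ X → y ∈ X → x ≠ y → s(x, y) ∉ L → ∃ i, s(x, y) = s(a i, b i)) ∧
  ∀ i : Fin m,
    p i ∈ X ∧ q i ∈ X ∧ p i ≠ q i ∧
    p i ≠ a i ∧ p i ≠ b i ∧ q i ≠ a i ∧ q i ≠ b i ∧
    DisplaysQ G (a i) (p i) (b i) (q i) ∧
    ∀ u w : U, u ∈ ({a i, b i, p i, q i} : Set U) → w ∈ ({a i, b i, p i, q i} : Set U) →
      u ≠ w → s(u, w) ≠ s(a i, b i) →
      (s(u, w) ∈ L ∨ ∃ j : Fin m, j < i ∧ s(u, w) = s(a j, b j))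

/-- `L` is an `s`-lasso for `G`. -/
def SLasso (X : Set U) (G : SimpleGraph U) (L : Set (Sym2 U)) : Prop :=
  cup L = X ∧ ∃ (m : ℕ) (a b p q : Fin m → U), IsShelling X G L m a b p q

/-- `L'_{A,B}` of Corollary 3 (the cherry construction). -/
def LAB (L' : Set (Sym2 U)) (X : Set U) (a b : U) (A B : Set U) : Set (Sym2 U) :=
  {c | c ∈ L' ∧ ∀ u ∈ c, u ∈ X ∧ u ≠ a ∧ u ≠ b} ∪
  {c | ∃ x ∈ A ∪ {b}, c = s(a, x)} ∪
  {c | ∃ x ∈ B, c = s(b, x)}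

end Lasso
namespace Lasso

lemma star_adj {X : Set U} {z : U} (hz : z ∉ X) {u v : U} :
    (starGraph X z).Adj u v ↔ ((u ∈ X ∧ v = z) ∨ (v ∈ X ∧ u = z)) ∧ u ≠ v := by
  unfold starGraph
  rw [SimpleGraph.fromEdgeSet_adj]
  constructor
  · rintro ⟨⟨x, hx, hxz⟩, hne⟩
    refine ⟨?_, hne⟩
    rw [Sym2.eq_iff] at hxz
    rcases hxz with ⟨rfl, rfl⟩ | ⟨rfl, rfl⟩
    · exact Or.inl ⟨hx, rfl⟩
    · exact Or.inr ⟨hx, rfl⟩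
  · rintro ⟨h, hne⟩
    refine ⟨?_, hne⟩
    rcases h with ⟨hu, rfl⟩ | ⟨hv, rfl⟩
    · exact ⟨u, hu, rfl⟩
    · exact ⟨v, hv, Sym2.eq_swap⟩

lemma star_edge {X : Set U} {z : U} (hz : z ∉ X) {e : Sym2 U} :
    e ∈ (starGraph X z).edgeSet ↔ ∃ x ∈ X, e = s(x, z) := by
  induction e using Sym2.ind with
  | _ u v =>
    rw [SimpleGraph.mem_edgeSet, star_adj hz]
    constructor
    · rintro ⟨⟨hu, rfl⟩ | ⟨hv, rfl⟩, hne⟩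
      · exact ⟨u, hu, rfl⟩
      · exact ⟨v, hv, Sym2.eq_swap⟩
    · rintro ⟨x, hx, hxz⟩
      rw [Sym2.eq_iff] at hxz
      rcases hxz with ⟨rfl, rfl⟩ | ⟨rfl, rfl⟩
      · exact ⟨Or.inl ⟨hx, rfl⟩, fun h => hz (h ▸ hx)⟩
      · refine ⟨Or.inr ⟨hx, rfl⟩, fun h => hz (h.symm ▸ hx)⟩

lemma star_walk_mem {X : Set U} {z : U} (hz : z ∉ X) {a b : U}
    (ha : a ∈ X) (hab : a ≠ b) (p : (starGraph X z).Walk a b) :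
    s(a, z) ∈ p.edges := by
  cases p with
  | nil => exact absurd rfl hab
  | @cons _ c _ h q =>
    have hc : c = z := by
      rcases (star_adj hz).1 h with ⟨⟨_, rfl⟩ | ⟨_, rfl⟩, hne⟩
      · rfl
      · exact absurd ha hz
    subst hc
    simp [SimpleGraph.Walk.edges_cons]

lemma pathEdges_star {X : Set U} {z : U} (hz : z ∉ X) {a b : U}
    (ha : a ∈ X) (hb : b ∈ X) (hab : a ≠ b) :
    pathEdges (starGraph X z) a b = {s(a, z), s(b, z)} := by
  have haz : (starGraph X z).Adj a z :=
    (star_adj hz).2 ⟨Or.inl ⟨ha, rfl⟩, fun h => hz (h ▸ ha)⟩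
  have hbz : (starGraph X z).Adj b z :=
    (star_adj hz).2 ⟨Or.inl ⟨hb, rfl⟩, fun h => hz (h ▸ hb)⟩
  ext e
  simp only [Set.mem_insert_iff, Set.mem_singleton_iff]
  constructor
  · rintro ⟨heE, hall⟩
    have := hall (SimpleGraph.Walk.cons haz (SimpleGraph.Walk.cons hbz.symm SimpleGraph.Walk.nil))
    simp only [SimpleGraph.Walk.edges_cons, SimpleGraph.Walk.edges_nil, List.mem_cons,
      List.not_mem_nil, or_false] at this
    rcases this with h | h
    · exact Or.inl h
    · exact Or.inr (h.trans Sym2.eq_swap)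
  · rintro (rfl | rfl)
    · exact ⟨(star_edge hz).2 ⟨a, ha, rfl⟩, fun p => star_walk_mem hz ha hab p⟩
    · refine ⟨(star_edge hz).2 ⟨b, hb, rfl⟩, fun p => ?_⟩
      have := star_walk_mem hz hb hab.symm p.reverse
      rwa [SimpleGraph.Walk.edges_reverse, List.mem_reverse] at this

lemma tdist_star {X : Set U} {z : U} (hz : z ∉ X) {a b : U}
    (ha : a ∈ X) (hb : b ∈ X) (hab : a ≠ b) (ω : Sym2 U → ℝ) :
    tdist (starGraph X z) ω a b = ω s(a, z) + ω s(b, z) := by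
  rw [tdist, pathEdges_star hz ha hb hab]
  have hne : s(a, z) ≠ s(b, z) := by
    intro h
    rcases Sym2.eq_iff.1 h with ⟨h1, _⟩ | ⟨h1, _⟩
    · exact hab h1
    · exact hz (h1 ▸ ha)
  exact finsum_mem_pair hne

/-- The canonical star weighting perturbed by `g`. -/
def starW (X : Set U) (z : U) (g : U → ℝ) : Sym2 U → ℝ :=
  Sym2.lift ⟨fun u v =>
    if u ∈ X ∧ v = z then 1 + g u else if v ∈ X ∧ u = z then 1 + g v else 0, by
    intro u v
    dsimp only
    by_cases h1 : u ∈ X ∧ v = z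
    · by_cases h2 : v ∈ X ∧ u = z
      · rw [if_pos h1, if_pos h2]
        have huv : u = v := h2.2.trans h1.2.symm
        rw [huv]
      · rw [if_pos h1, if_neg h2, if_pos h1]
    · by_cases h2 : v ∈ X ∧ u = z
      · rw [if_neg h1, if_pos h2, if_pos h2]
      · rw [if_neg h1, if_neg h2, if_neg h1, if_neg h2]⟩

lemma starW_apply (X : Set U) (z : U) (g : U → ℝ) {a : U} (ha : a ∈ X) :
    starW X z g s(a, z) = 1 + g a := by
  simp [starW, ha]

lemma starW_proper {X : Set U} {z : U} (hz : z ∉ X) (g : U → ℝ)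
    (hg : ∀ u, -(1/2 : ℝ) ≤ g u) :
    IsProperWeighting (starGraph X z) (starW X z g) := by
  refine ⟨⟨?_, ?_⟩, ?_⟩
  · intro e
    induction e using Sym2.ind with
    | _ u v =>
      simp only [starW, Sym2.lift_mk]
      split_ifs with h1 h2
      · linarith [hg u]
      · linarith [hg v]
      · exact le_refl 0
  · intro e
    induction e using Sym2.ind with
    | _ u v =>
      intro he
      simp only [starW, Sym2.lift_mk]
      split_ifs with h1 h2
      · exact absurd ((star_edge hz).2 ⟨u, h1.1, by rw [h1.2]⟩) he
      · exact absurd ((star_edge hz).2 ⟨v, h2.1, by rw [h2.2]; exact Sym2.eq_swap⟩) he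
      · rfl
  · intro e he _
    obtain ⟨a, ha, rfl⟩ := (star_edge hz).1 he
    rw [starW_apply X z g ha]
    linarith [hg a]

/-- For the star tree `T*` on `X` (`|X| = n ≥ 3`, central vertex `z ∉ X`):
a set `L` of cords with `X = ⋃ L` is an edge-weight lasso for `T*` iff `L`
is strongly non-bipartite. -/
theorem star_edgeWeightLasso_iff_stronglyNonBipartite {U : Type}
    (X : Set U) (z : U) (hz : z ∉ X)
    (hXfin : X.Finite) (hX3 : 3 ≤ X.ncard)
    (L : Set (Sym2 U)) (hL : IsCordSet X L) (hcup : cup L = X) :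
    EdgeWeightLasso (starGraph X z) L ↔
      StronglyNonBipartite (SimpleGraph.fromEdgeSet L) X := by
  classical
  constructor
  · -- lasso → strongly non-bipartite
    intro hlasso x hx hbip
    obtain ⟨f, hf⟩ := hbip
    set Γ := SimpleGraph.fromEdgeSet L with hΓ
    set g : U → ℝ := fun u =>
      if Γ.Reachable x u then (if f u then 1/2 else -(1/2)) else 0 with hg
    have hgb : ∀ u, -(1/2 : ℝ) ≤ g u := by
      intro u; simp only [hg]; split_ifs <;> norm_num
    have hω := starW_proper hz (fun _ => (0 : ℝ)) (by intro u; norm_num)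
    have hω' := starW_proper hz g hgb
    have hiso : LIso L (starGraph X z) (starW X z fun _ => 0)
        (starGraph X z) (starW X z g) := by
      intro p q hpq
      obtain ⟨hd, hmem⟩ := hL _ hpq
      have hp : p ∈ X := hmem p (Sym2.mem_mk_left p q)
      have hq : q ∈ X := hmem q (Sym2.mem_mk_right p q)
      have hne : p ≠ q := fun h => hd (Sym2.mk_isDiag_iff.mpr h)
      rw [tdist_star hz hp hq hne, tdist_star hz hp hq hne,
        starW_apply X z _ hp, starW_apply X z _ hq,
        starW_apply X z _ hp, starW_apply X z _ hq]
      have hadj : Γ.Adj p q := by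
        rw [hΓ, SimpleGraph.fromEdgeSet_adj]; exact ⟨hpq, hne⟩
      by_cases hr : Γ.Reachable x p
      · have hrq : Γ.Reachable x q := hr.trans hadj.reachable
        have hfpq := hf p q hr hadj
        simp only [hg, if_pos hr, if_pos hrq]
        rcases Bool.eq_false_or_eq_true (f p) with hfp | hfp <;>
          rcases Bool.eq_false_or_eq_true (f q) with hfq | hfq <;>
          rw [hfp, hfq] at hfpq ⊢ <;>
          first
          | (exact absurd rfl hfpq)
          | norm_num
      · have hrq : ¬ Γ.Reachable x q := fun h => hr (h.trans hadj.symm.reachable)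
        simp only [hg, if_neg hr, if_neg hrq]
    have heq := hlasso _ _ hω hω' hiso
    have hx' := congrFun heq s(x, z)
    rw [starW_apply X z _ hx, starW_apply X z _ hx] at hx'
    have hrx : Γ.Reachable x x := SimpleGraph.Reachable.refl x
    simp only [hg, if_pos hrx] at hx'
    rcases Bool.eq_false_or_eq_true (f x) with hfx | hfx <;>
      rw [hfx] at hx' <;> norm_num at hx'
  · -- strongly non-bipartite → lasso
    intro hsnb ω ω' hω hω' hiso
    funext e
    by_cases he : e ∈ (starGraph X z).edgeSet
    · obtain ⟨a, haX, rfl⟩ := (star_edge hz).1 he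
      set Γ := SimpleGraph.fromEdgeSet L with hΓ
      set d : U → ℝ := fun u => ω s(u, z) - ω' s(u, z) with hd
      have hadj : ∀ u v, Γ.Adj u v → d v = -d u := by
        intro u v huv
        rw [hΓ, SimpleGraph.fromEdgeSet_adj] at huv
        obtain ⟨hmemL, hne⟩ := huv
        obtain ⟨_, hmem⟩ := hL _ hmemL
        have hu : u ∈ X := hmem u (Sym2.mem_mk_left u v)
        have hv : v ∈ X := hmem v (Sym2.mem_mk_right u v)
        have hiso' := hiso u v hmemL
        rw [tdist_star hz hu hv hne, tdist_star hz hu hv hne] at hiso'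
        simp only [hd]
        linarith
      have key : ∀ u v : U, Γ.Walk u v → d v = d u ∨ d v = -d u := by
        intro u v p
        induction p with
        | nil => exact Or.inl rfl
        | cons h q ih =>
          have h2 := hadj _ _ h
          rcases ih with h1 | h1
          · right; rw [h1, h2]
          · left; rw [h1, h2]; ring
      have hreach : ∀ u, Γ.Reachable a u → d u = d a ∨ d u = -d a :=
        fun u h => h.elim (fun p => key a u p)
      have hda : d a = 0 := by
        by_contra hda
        refine hsnb a haX ⟨fun u => decide (0 < d u), ?_⟩
        intro u v hru huv
        have h1 := hreach u hru
        have h2 := hadj u v huv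
        have hu0 : d u ≠ 0 := by
          rcases h1 with h | h <;> rw [h] <;> simpa using hda
        simp only [ne_eq, decide_eq_decide]
        intro hiff
        rcases hu0.lt_or_gt with h | h
        · have hv0 : 0 < d v := by rw [h2]; linarith
          have := hiff.mpr hv0
          linarith
        · have := hiff.mp h
          rw [h2] at this
          linarith
      have : ω s(a, z) - ω' s(a, z) = 0 := hda
      linarith
    · rw [hω.toIsWeighting.zero_off e he, hω'.toIsWeighting.zero_off e he]


end Lasso
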